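/- arXiv:1105.5313 — 2 statements merged into one kernel-verified Lean document; each statement's English description precedes it below -/
import Mathlib

section
/- The number of elements of the double Catalan monoid DC_n equals the number of 4321-avoiding permutations in S_n. -/
open Pointwise

/-- The simple transposition `(i, i+1)` in the symmetric group on `Fin n`. -/
def simpleT {n : ℕ} (i : Fin (n - 1)) : Equiv.Perm (Fin n) :=
  Equiv.swap ⟨i.1, by have := i.2; omega⟩ ⟨i.1 + 1, by have := i.2; omega⟩

/-- Defining relations of the 0-Hecke monoid. -/
def heckeRels (n : ℕ) : Set (FreeMonoid (Fin (n - 1)) × FreeMonoid (Fin (n - 1))) :=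
  {p | (∃ i, p = (FreeMonoid.of i * FreeMonoid.of i, FreeMonoid.of i)) ∨
       (∃ i j, i.1 + 2 ≤ j.1 ∧
          p = (FreeMonoid.of i * FreeMonoid.of j, FreeMonoid.of j * FreeMonoid.of i)) ∨
       (∃ i j, j.1 = i.1 + 1 ∧
          p = (FreeMonoid.of i * FreeMonoid.of j * FreeMonoid.of i,
               FreeMonoid.of j * FreeMonoid.of i * FreeMonoid.of j))}

/-- The congruence on the free monoid generated by the 0-Hecke relations. -/
def heckeCon (n : ℕ) : Con (FreeMonoid (Fin (n - 1))) :=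
  conGen (fun a b => (a, b) ∈ heckeRels n)

/-- The 0-Hecke monoid `H_n`. -/
abbrev Hecke (n : ℕ) := (heckeCon n).Quotient

/-- The generator `e_i` of the 0-Hecke monoid. -/
def heckeGen (n : ℕ) (i : Fin (n - 1)) : Hecke n := (heckeCon n).mk' (FreeMonoid.of i)

/-- Binary relations on `Fin n` (equivalently, `n × n` Boolean matrices),
with `ξ i j` meaning the `(i,j)` entry is `1`. -/
abbrev BRel (n : ℕ) := Fin n → Fin n → Prop

/-- The monoid of binary relations / Boolean matrices, under relational
composition (= Boolean matrix multiplication). -/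
instance BRel.instMonoid (n : ℕ) : Monoid (BRel n) where
  mul r s := fun i j => ∃ k, r i k ∧ s k j
  one := fun i j => i = j
  mul_assoc r s t := by
    funext i j
    show (∃ k, (∃ m, r i m ∧ s m k) ∧ t k j) = (∃ m, r i m ∧ ∃ k, s m k ∧ t k j)
    apply propext; tauto
  one_mul r := by
    funext i j
    show (∃ k, i = k ∧ r k j) = r i j
    apply propext
    constructor
    · rintro ⟨k, rfl, h⟩; exact h
    · intro h; exact ⟨i, rfl, h⟩
  mul_one r := by
    funext i j
    show (∃ k, r i k ∧ k = j) = r i j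
    apply propext
    constructor
    · rintro ⟨k, h, rfl⟩; exact h
    · intro h; exact ⟨j, h, rfl⟩

theorem BRel.mul_def {n : ℕ} (r s : BRel n) (i j : Fin n) :
    (r * s) i j ↔ ∃ k, r i k ∧ s k j := Iff.rfl

theorem BRel.one_def {n : ℕ} (i j : Fin n) : (1 : BRel n) i j ↔ i = j := Iff.rfl

/-- The generator `ε_i = Φ(id) + Φ(s_i)` of the double Catalan monoid:
the identity matrix plus extra `1` entries at `(i, i+1)` and `(i+1, i)`. -/
def eps {n : ℕ} (i : Fin (n - 1)) : BRel n := fun a b => a = b ∨ a = simpleT i b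

/-- The double Catalan monoid `DC_n`, the submonoid of Boolean matrices
generated by the `ε_i`. -/
def DC (n : ℕ) : Submonoid (BRel n) := Submonoid.closure (Set.range (eps (n := n)))

open Classical in
/-- `max(ξ)(j)` : the largest row index `i` with `ξ i j` (for a reflexive
relation; the diagonal element `j` is thrown in to guarantee nonemptiness). -/
noncomputable def maxF {n : ℕ} (ξ : BRel n) (j : Fin n) : Fin n :=
  (insert j (Finset.univ.filter fun i => ξ i j)).max' (Finset.insert_nonempty _ _)

open Classical in
/-- `min(ξ)(j)` : the smallest row index `i` with `ξ i j`. -/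
noncomputable def minF {n : ℕ} (ξ : BRel n) (j : Fin n) : Fin n :=
  (insert j (Finset.univ.filter fun i => ξ i j)).min' (Finset.insert_nonempty _ _)

/-- A set of `Fin n` is an interval of consecutive integers. -/
def IsIntervalSet {n : ℕ} (S : Set (Fin n)) : Prop :=
  ∀ ⦃a b c : Fin n⦄, a ≤ b → b ≤ c → a ∈ S → c ∈ S → b ∈ S

/-- A binary relation is convex if it is reflexive and all its rows and
columns are intervals. -/
def IsConvexRel {n : ℕ} (ξ : BRel n) : Prop :=
  (∀ i, ξ i i) ∧ (∀ j, IsIntervalSet {i | ξ i j}) ∧ (∀ j, IsIntervalSet {i | ξ j i})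

/-- The left-to-right maximum function `α_w`. -/
def lrMax {n : ℕ} (w : Equiv.Perm (Fin n)) (j : Fin n) : Fin n :=
  (Finset.Iic j).sup' ⟨j, Finset.mem_Iic.2 le_rfl⟩ (fun k => w k)

/-- The right-to-left minimum function `β_w`. -/
def rlMin {n : ℕ} (w : Equiv.Perm (Fin n)) (j : Fin n) : Fin n :=
  (Finset.Ici j).inf' ⟨j, Finset.mem_Ici.2 le_rfl⟩ (fun k => w k)

/-- The Boolean matrix `Ψ(z_w)`, the image of `w` in the double Catalan
monoid: the `(i,j)` entry is `1` iff `β_w(j) ≤ i ≤ α_w(j)`. -/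
def psiMat {n : ℕ} (w : Equiv.Perm (Fin n)) : BRel n :=
  fun i j => rlMin w j ≤ i ∧ i ≤ lrMax w j

/-- `l` is a reduced word for the permutation `w`. -/
def IsRedWord {n : ℕ} (w : Equiv.Perm (Fin n)) (l : List (Fin (n - 1))) : Prop :=
  (l.map simpleT).prod = w ∧
    ∀ l' : List (Fin (n - 1)), (l'.map simpleT).prod = w → l.length ≤ l'.length

/-- The Bruhat order on the symmetric group, via the subword property. -/
def bruhatLE {n : ℕ} (u w : Equiv.Perm (Fin n)) : Prop :=
  ∃ lw, IsRedWord w lw ∧ ∃ lu, lu.Sublist lw ∧ IsRedWord u lu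

/-- `w` is 321-avoiding. -/
def Avoids321 {n : ℕ} (w : Equiv.Perm (Fin n)) : Prop :=
  ¬ ∃ i j k : Fin n, i < j ∧ j < k ∧ w k < w j ∧ w j < w i

/-- `w` is 312-avoiding. -/
def Avoids312 {n : ℕ} (w : Equiv.Perm (Fin n)) : Prop :=
  ¬ ∃ i j k : Fin n, i < j ∧ j < k ∧ w j < w k ∧ w k < w i

/-- `w` is 4321-avoiding. -/
def Avoids4321 {n : ℕ} (w : Equiv.Perm (Fin n)) : Prop :=
  ¬ ∃ i j k l : Fin n, i < j ∧ j < k ∧ k < l ∧ w l < w k ∧ w k < w j ∧ w j < w i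

/-- The monoid `C_n^+` of order-preserving non-decreasing transformations. -/
def Cplus (n : ℕ) : Submonoid (Function.End (Fin n)) where
  carrier := {f | Monotone f ∧ ∀ i, i ≤ f i}
  one_mem' := ⟨monotone_id, fun _ => le_rfl⟩
  mul_mem' := by
    rintro f g ⟨hf1, hf2⟩ ⟨hg1, hg2⟩
    exact ⟨hf1.comp hg1, fun i => (hg2 i).trans (hf2 (g i))⟩

/-- The monoid `C_n^-` of order-preserving non-increasing transformations. -/
def Cminus (n : ℕ) : Submonoid (Function.End (Fin n)) where
  carrier := {f | Monotone f ∧ ∀ i, f i ≤ i}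
  one_mem' := ⟨monotone_id, fun _ => le_rfl⟩
  mul_mem' := by
    rintro f g ⟨hf1, hf2⟩ ⟨hg1, hg2⟩
    exact ⟨hf1.comp hg1, fun i => (hf2 (g i)).trans (hg2 i)⟩


theorem Equiv.Perm.apply_inv_self {α : Type*} (f : Equiv.Perm α) (x : α) : f (f⁻¹ x) = x :=
  Equiv.apply_symm_apply f x

namespace Stmt12

variable {n : ℕ}

/-- The lower point of the transposition `simpleT i`. -/
def fa (i : Fin (n - 1)) : Fin n := ⟨i.1, by have := i.2; omega⟩
/-- The upper point of the transposition `simpleT i`. -/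
def fb (i : Fin (n - 1)) : Fin n := ⟨i.1 + 1, by have := i.2; omega⟩

lemma fa_val (i : Fin (n - 1)) : (fa (n := n) i).1 = i.1 := rfl
lemma fb_val (i : Fin (n - 1)) : (fb (n := n) i).1 = i.1 + 1 := rfl

lemma simpleT_def (i : Fin (n - 1)) : simpleT (n := n) i = Equiv.swap (fa i) (fb i) := rfl

lemma fa_lt_fb (i : Fin (n - 1)) : fa (n := n) i < fb i := by
  simp [Fin.lt_def, fa_val, fb_val]

-- basic lemmas on lrMax / rlMin
lemma le_lrMax (w : Equiv.Perm (Fin n)) {k j : Fin n} (h : k ≤ j) : w k ≤ lrMax w j :=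
  Finset.le_sup' _ (Finset.mem_Iic.2 h)

lemma rlMin_le (w : Equiv.Perm (Fin n)) {k j : Fin n} (h : j ≤ k) : rlMin w j ≤ w k :=
  Finset.inf'_le _ (Finset.mem_Ici.2 h)

lemma self_le_lrMax (w : Equiv.Perm (Fin n)) (j : Fin n) : w j ≤ lrMax w j :=
  le_lrMax w le_rfl

lemma rlMin_le_self (w : Equiv.Perm (Fin n)) (j : Fin n) : rlMin w j ≤ w j :=
  rlMin_le w le_rfl

lemma rlMin_le_lrMax (w : Equiv.Perm (Fin n)) (j : Fin n) : rlMin w j ≤ lrMax w j :=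
  (rlMin_le_self w j).trans (self_le_lrMax w j)

lemma exists_lrMax (w : Equiv.Perm (Fin n)) (j : Fin n) :
    ∃ k ≤ j, lrMax w j = w k := by
  obtain ⟨k, hk, hk2⟩ := Finset.exists_mem_eq_sup' (s := Finset.Iic j)
    ⟨j, Finset.mem_Iic.2 le_rfl⟩ (fun k => w k)
  exact ⟨k, Finset.mem_Iic.1 hk, hk2⟩

lemma exists_rlMin (w : Equiv.Perm (Fin n)) (j : Fin n) :
    ∃ k, j ≤ k ∧ rlMin w j = w k := by
  obtain ⟨k, hk, hk2⟩ := Finset.exists_mem_eq_inf' (s := Finset.Ici j)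
    ⟨j, Finset.mem_Ici.2 le_rfl⟩ (fun k => w k)
  exact ⟨k, Finset.mem_Ici.1 hk, hk2⟩

lemma lrMax_le (w : Equiv.Perm (Fin n)) {j m : Fin n} (h : ∀ k ≤ j, w k ≤ m) :
    lrMax w j ≤ m :=
  Finset.sup'_le _ _ fun k hk => h k (Finset.mem_Iic.1 hk)

lemma le_rlMin (w : Equiv.Perm (Fin n)) {j m : Fin n} (h : ∀ k, j ≤ k → m ≤ w k) :
    m ≤ rlMin w j :=
  Finset.le_inf' _ _ fun k hk => h k (Finset.mem_Ici.1 hk)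

lemma lrMax_mono (w : Equiv.Perm (Fin n)) : Monotone (lrMax w) := fun j j' h =>
  lrMax_le w fun k hk => le_lrMax w (hk.trans h)

lemma rlMin_mono (w : Equiv.Perm (Fin n)) : Monotone (rlMin w) := fun j j' h =>
  le_rlMin (w := w) (j := j') fun k hk => rlMin_le w (h.trans hk)

lemma psiMat_apply (w : Equiv.Perm (Fin n)) (x j : Fin n) :
    psiMat w x j ↔ rlMin w j ≤ x ∧ x ≤ lrMax w j := Iff.rfl

lemma lrMax_eq_of_psiMat_eq {w w' : Equiv.Perm (Fin n)} (h : psiMat w = psiMat w') :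
    lrMax w = lrMax w' := by
  have key : ∀ u v : Equiv.Perm (Fin n), psiMat u = psiMat v →
      ∀ j, lrMax u j ≤ lrMax v j := by
    intro u v huv j
    have h1 : psiMat u (lrMax u j) j := ⟨rlMin_le_lrMax u j, le_rfl⟩
    rw [huv] at h1
    exact h1.2
  funext j
  exact le_antisymm (key w w' h j) (key w' w h.symm j)

lemma rlMin_eq_of_psiMat_eq {w w' : Equiv.Perm (Fin n)} (h : psiMat w = psiMat w') :
    rlMin w = rlMin w' := by
  have key : ∀ u v : Equiv.Perm (Fin n), psiMat u = psiMat v →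
      ∀ j, rlMin v j ≤ rlMin u j := by
    intro u v huv j
    have h1 : psiMat u (rlMin u j) j := ⟨le_rfl, rlMin_le_lrMax u j⟩
    rw [huv] at h1
    exact h1.1
  funext j
  exact le_antisymm (key w' w h.symm j) (key w w' h j)

lemma psiMat_eq_of {w w' : Equiv.Perm (Fin n)} (h1 : lrMax w = lrMax w')
    (h2 : rlMin w = rlMin w') : psiMat w = psiMat w' := by
  unfold psiMat; rw [h1, h2]

-- eps multiplication
lemma eps_mul_apply (i : Fin (n - 1)) (ξ : BRel n) (x j : Fin n) :
    (eps i * ξ) x j ↔ ξ x j ∨ ξ (simpleT i x) j := by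
  rw [BRel.mul_def]
  constructor
  · rintro ⟨k, hk1 | hk1, hk2⟩
    · exact Or.inl (hk1 ▸ hk2)
    · refine Or.inr ?_
      have : simpleT i x = k := by rw [hk1, simpleT_def, Equiv.swap_apply_self]
      exact this ▸ hk2
  · rintro (h | h)
    · exact ⟨x, Or.inl rfl, h⟩
    · exact ⟨simpleT i x, Or.inr (by rw [simpleT_def, Equiv.swap_apply_self]), h⟩

lemma swap_val (i : Fin (n - 1)) (x : Fin n) :
    ((simpleT i x : Fin n)).1 = if x.1 = i.1 then i.1 + 1 else if x.1 = i.1 + 1 then i.1 else x.1 := by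
  rw [simpleT_def, Equiv.swap_apply_def]
  rcases eq_or_ne x (fa i) with h | h
  · simp [h, fa_val, fb_val]
  · rcases eq_or_ne x (fb i) with h2 | h2
    · have hba : fb i ≠ fa i := by
        simp [Fin.ext_iff, fa_val, fb_val]
      have : x.1 ≠ i.1 := fun hx => h (Fin.ext hx)
      simp [h2, fb_val, fa_val, hba, this]
    · have hx1 : x.1 ≠ i.1 := fun hx => h (Fin.ext hx)
      have hx2 : x.1 ≠ i.1 + 1 := fun hx => h2 (Fin.ext hx)
      simp [if_neg h, if_neg h2, hx1, hx2]

/-- the key arithmetic fact: applying `ε_i` to an interval column -/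
lemma interval_union_swap (i : Fin (n - 1)) (al be x : Fin n) (hba : be ≤ al) :
    ((be ≤ x ∧ x ≤ al) ∨ (be ≤ simpleT i x ∧ simpleT i x ≤ al)) ↔
      ((if be = fb i then fa i else be) ≤ x ∧ x ≤ (if al = fa i then fb i else al)) := by
  have hsx := swap_val i x
  have hbe : (if be = fb i then fa i else be).1 =
      (if be.1 = i.1 + 1 then i.1 else be.1) := by
    split_ifs with h1 h2 h2 <;>
      simp_all [fa_val, Fin.ext_iff, fb_val]
  have hal : (if al = fa i then fb i else al).1 =
      (if al.1 = i.1 then i.1 + 1 else al.1) := by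
    split_ifs with h1 h2 h2 <;>
      simp_all [fa_val, Fin.ext_iff, fb_val]
  rw [Fin.le_def, Fin.le_def, Fin.le_def, Fin.le_def, Fin.le_def, Fin.le_def] at *
  rw [hbe, hal]
  have hn := x.2
  have hi := i.2
  split_ifs at hsx ⊢ <;> omega


lemma simpleT_apply_fa (i : Fin (n - 1)) : simpleT (n := n) i (fa i) = fb i := by
  rw [simpleT_def, Equiv.swap_apply_left]

lemma simpleT_apply_fb (i : Fin (n - 1)) : simpleT (n := n) i (fb i) = fa i := by
  rw [simpleT_def, Equiv.swap_apply_right]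

lemma eq_inv_of_apply {w : Equiv.Perm (Fin n)} {p x : Fin n} (h : w p = x) : w⁻¹ x = p := by
  rw [← h]; exact w.symm_apply_apply p

lemma lrMax_swap_mul {i : Fin (n - 1)} (w : Equiv.Perm (Fin n))
    (h : w⁻¹ (fa i) < w⁻¹ (fb i)) (j : Fin n) :
    lrMax (simpleT i * w) j = if lrMax w j = fa i then fb i else lrMax w j := by
  obtain ⟨p, hp, hpm⟩ := exists_lrMax w j
  by_cases hm : lrMax w j = fa i
  · rw [if_pos hm]
    apply le_antisymm
    · apply lrMax_le
      intro k hk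
      have hk2 : w k ≤ lrMax w j := le_lrMax w hk
      rw [hm] at hk2
      have h1 := swap_val i (w k)
      rw [Fin.le_def] at hk2 ⊢
      rw [fa_val] at hk2
      rw [Equiv.Perm.mul_apply, fb_val]
      split_ifs at h1 <;> omega
    · have hwp : w p = fa i := by rw [← hpm, hm]
      have : (simpleT i * w) p = fb i := by
        rw [Equiv.Perm.mul_apply, hwp, simpleT_apply_fa]
      calc fb i = (simpleT i * w) p := this.symm
        _ ≤ _ := le_lrMax _ hp
  · rw [if_neg hm]
    apply le_antisymm
    · apply lrMax_le
      intro k hk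
      have hk2 : w k ≤ lrMax w j := le_lrMax w hk
      have hne : (lrMax w j).1 ≠ i.1 := fun hx => hm (Fin.ext (by rw [hx, fa_val]))
      have h1 := swap_val i (w k)
      rw [Fin.le_def] at hk2 ⊢
      rw [Equiv.Perm.mul_apply]
      split_ifs at h1 <;> omega
    · by_cases hmb : lrMax w j = fb i
      · have hq : w⁻¹ (fb i) ≤ j := by
          have : w⁻¹ (fb i) = p := eq_inv_of_apply (by rw [← hpm, hmb])
          rw [this]; exact hp
        have hq2 : w⁻¹ (fa i) ≤ j := le_of_lt (lt_of_lt_of_le h hq)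
        have : (simpleT i * w) (w⁻¹ (fa i)) = fb i := by
          rw [Equiv.Perm.mul_apply, Equiv.Perm.apply_inv_self, simpleT_apply_fa]
        calc lrMax w j = fb i := hmb
          _ = (simpleT i * w) (w⁻¹ (fa i)) := this.symm
          _ ≤ _ := le_lrMax _ hq2
      · have : (simpleT i * w) p = lrMax w j := by
          rw [Equiv.Perm.mul_apply, ← hpm, simpleT_def,
            Equiv.swap_apply_of_ne_of_ne (hpm ▸ hm) (hpm ▸ hmb)]
        calc lrMax w j = (simpleT i * w) p := this.symm
          _ ≤ _ := le_lrMax _ hp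

lemma rlMin_swap_mul {i : Fin (n - 1)} (w : Equiv.Perm (Fin n))
    (h : w⁻¹ (fa i) < w⁻¹ (fb i)) (j : Fin n) :
    rlMin (simpleT i * w) j = if rlMin w j = fb i then fa i else rlMin w j := by
  obtain ⟨p, hp, hpm⟩ := exists_rlMin w j
  by_cases hm : rlMin w j = fb i
  · rw [if_pos hm]
    apply le_antisymm
    · have hwp : w p = fb i := by rw [← hpm, hm]
      have : (simpleT i * w) p = fa i := by
        rw [Equiv.Perm.mul_apply, hwp, simpleT_apply_fb]
      calc rlMin (simpleT i * w) j ≤ (simpleT i * w) p := rlMin_le _ hp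
        _ = fa i := this
    · apply le_rlMin
      intro k hk
      have hk2 : rlMin w j ≤ w k := rlMin_le w hk
      rw [hm] at hk2
      have h1 := swap_val i (w k)
      rw [Fin.le_def] at hk2 ⊢
      rw [fb_val] at hk2
      rw [Equiv.Perm.mul_apply, fa_val]
      split_ifs at h1 <;> omega
  · rw [if_neg hm]
    apply le_antisymm
    · by_cases hma : rlMin w j = fa i
      · have hq : j ≤ w⁻¹ (fa i) := by
          have : w⁻¹ (fa i) = p := eq_inv_of_apply (by rw [← hpm, hma])
          rw [this]; exact hp
        have hq2 : j ≤ w⁻¹ (fb i) := le_of_lt (lt_of_le_of_lt hq h)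
        have : (simpleT i * w) (w⁻¹ (fb i)) = fa i := by
          rw [Equiv.Perm.mul_apply, Equiv.Perm.apply_inv_self, simpleT_apply_fb]
        calc rlMin (simpleT i * w) j ≤ (simpleT i * w) (w⁻¹ (fb i)) := rlMin_le _ hq2
          _ = fa i := this
          _ = rlMin w j := hma.symm
      · have : (simpleT i * w) p = rlMin w j := by
          rw [Equiv.Perm.mul_apply, ← hpm, simpleT_def,
            Equiv.swap_apply_of_ne_of_ne (hpm ▸ hma) (hpm ▸ hm)]
        calc rlMin (simpleT i * w) j ≤ (simpleT i * w) p := rlMin_le _ hp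
          _ = rlMin w j := this
    · apply le_rlMin
      intro k hk
      have hk2 : rlMin w j ≤ w k := rlMin_le w hk
      have hne : (rlMin w j).1 ≠ i.1 + 1 := fun hx => hm (Fin.ext (by rw [hx, fb_val]))
      have h1 := swap_val i (w k)
      rw [Fin.le_def] at hk2 ⊢
      rw [Equiv.Perm.mul_apply]
      split_ifs at h1 <;> omega

lemma lrMax_one (j : Fin n) : lrMax (1 : Equiv.Perm (Fin n)) j = j := by
  apply le_antisymm
  · exact lrMax_le _ fun k hk => by simpa using hk
  · simpa using self_le_lrMax (1 : Equiv.Perm (Fin n)) j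

lemma rlMin_one (j : Fin n) : rlMin (1 : Equiv.Perm (Fin n)) j = j := by
  apply le_antisymm
  · simpa using rlMin_le_self (1 : Equiv.Perm (Fin n)) j
  · exact le_rlMin _ fun k hk => by simpa using hk

lemma psiMat_one : psiMat (1 : Equiv.Perm (Fin n)) = 1 := by
  funext x j
  apply propext
  rw [psiMat_apply, lrMax_one, rlMin_one, BRel.one_def]
  constructor
  · rintro ⟨h1, h2⟩; exact le_antisymm h2 h1
  · rintro rfl; exact ⟨le_rfl, le_rfl⟩

/-- The key Demazure-step lemma. -/
lemma eps_mul_psiMat (i : Fin (n - 1)) (w : Equiv.Perm (Fin n)) :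
    eps i * psiMat w =
      psiMat (if w⁻¹ (fa i) < w⁻¹ (fb i) then simpleT i * w else w) := by
  funext x j
  apply propext
  rw [eps_mul_apply]
  by_cases h : w⁻¹ (fa i) < w⁻¹ (fb i)
  · rw [if_pos h]
    rw [psiMat_apply, psiMat_apply, psiMat_apply, lrMax_swap_mul w h, rlMin_swap_mul w h]
    exact interval_union_swap i _ _ x (rlMin_le_lrMax w j)
  · rw [if_neg h]
    have hne : w⁻¹ (fb i) < w⁻¹ (fa i) := by
      rcases lt_or_eq_of_le (not_lt.1 h) with h1 | h1
      · exact h1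
      · exfalso
        have : fb i = fa i := by
          have := congrArg w h1
          rwa [Equiv.Perm.apply_inv_self, Equiv.Perm.apply_inv_self] at this
        have := congrArg Fin.val this
        rw [fa_val, fb_val] at this
        omega
    constructor
    · rintro (hx | hx)
      · exact hx
      · -- ψ (s x) j → ψ x j
        obtain ⟨h1, h2⟩ := hx
        have hal : (lrMax w j).1 ≠ i.1 := by
          intro hx2
          have hm : lrMax w j = fa i := Fin.ext (by rw [hx2, fa_val])
          obtain ⟨p, hp, hpm⟩ := exists_lrMax w j
          have : w⁻¹ (fa i) = p := eq_inv_of_apply (by rw [← hpm, hm])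
          have hfb : fb i ≤ lrMax w j := by
            have : w⁻¹ (fb i) ≤ j := le_of_lt (lt_of_lt_of_le hne (this ▸ hp))
            calc fb i = w (w⁻¹ (fb i)) := (Equiv.Perm.apply_inv_self w _).symm
              _ ≤ lrMax w j := le_lrMax w this
          rw [Fin.le_def, fb_val] at hfb
          omega
        have hbe : (rlMin w j).1 ≠ i.1 + 1 := by
          intro hx2
          have hm : rlMin w j = fb i := Fin.ext (by rw [hx2, fb_val])
          obtain ⟨p, hp, hpm⟩ := exists_rlMin w j
          have : w⁻¹ (fb i) = p := eq_inv_of_apply (by rw [← hpm, hm])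
          have hfa : rlMin w j ≤ fa i := by
            have : j ≤ w⁻¹ (fa i) := le_of_lt (lt_of_le_of_lt (this ▸ hp) hne)
            calc rlMin w j ≤ w (w⁻¹ (fa i)) := rlMin_le w this
              _ = fa i := Equiv.Perm.apply_inv_self w _
          rw [Fin.le_def, fa_val] at hfa
          omega
        have hsx := swap_val i x
        rw [psiMat_apply] at *
        simp only [Fin.le_def] at h1 h2 ⊢
        constructor
        · split_ifs at hsx <;> omega
        · split_ifs at hsx <;> omega
    · intro hx; exact Or.inl hx


/-- The inversion set of a permutation. -/
def invSet (w : Equiv.Perm (Fin n)) : Finset (Fin n × Fin n) :=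
  Finset.univ.filter fun p => p.1 < p.2 ∧ w p.2 < w p.1

lemma mem_invSet {w : Equiv.Perm (Fin n)} {p : Fin n × Fin n} :
    p ∈ invSet w ↔ p.1 < p.2 ∧ w p.2 < w p.1 := by
  simp [invSet]

lemma swap_lt {i : Fin (n - 1)} {x y : Fin n}
    (h1 : ¬(x = fa i ∧ y = fb i)) (h2 : ¬(x = fb i ∧ y = fa i)) :
    (simpleT i x < simpleT i y ↔ x < y) := by
  have hsx := swap_val i x
  have hsy := swap_val i y
  simp only [Fin.ext_iff, fa_val, fb_val, not_and] at h1 h2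
  rw [Fin.lt_def, Fin.lt_def]
  have := x.2; have := y.2
  split_ifs at hsx hsy <;> omega

lemma invSet_swap_mul {i : Fin (n - 1)} {w : Equiv.Perm (Fin n)}
    (h : w⁻¹ (fb i) < w⁻¹ (fa i)) :
    invSet (simpleT i * w) = (invSet w).erase (w⁻¹ (fb i), w⁻¹ (fa i)) := by
  ext p
  rw [Finset.mem_erase, mem_invSet, mem_invSet]
  by_cases hc1 : w p.1 = fb i ∧ w p.2 = fa i
  · have hp : p = (w⁻¹ (fb i), w⁻¹ (fa i)) := by
      have e1 := eq_inv_of_apply hc1.1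
      have e2 := eq_inv_of_apply hc1.2
      exact Prod.ext e1.symm e2.symm
    have hlhs : ¬ (simpleT i * w) p.2 < (simpleT i * w) p.1 := by
      rw [Equiv.Perm.mul_apply, Equiv.Perm.mul_apply, hc1.1, hc1.2,
        simpleT_apply_fa, simpleT_apply_fb]
      exact not_lt.2 (le_of_lt (fa_lt_fb i))
    constructor
    · rintro ⟨_, hx⟩; exact absurd hx hlhs
    · rintro ⟨hne, _⟩; exact absurd hp hne
  · by_cases hc2 : w p.1 = fa i ∧ w p.2 = fb i
    · have hp2 : ¬ p.1 < p.2 := by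
        have e1 := eq_inv_of_apply hc2.1
        have e2 := eq_inv_of_apply hc2.2
        rw [← e1, ← e2]
        exact not_lt.2 (le_of_lt h)
      constructor
      · rintro ⟨hx, _⟩; exact absurd hx hp2
      · rintro ⟨_, hx, _⟩; exact absurd hx hp2
    · have hne : p ≠ (w⁻¹ (fb i), w⁻¹ (fa i)) := by
        intro hp
        apply hc1
        constructor
        · rw [show p.1 = w⁻¹ (fb i) from congrArg Prod.fst hp, Equiv.Perm.apply_inv_self]
        · rw [show p.2 = w⁻¹ (fa i) from congrArg Prod.snd hp, Equiv.Perm.apply_inv_self]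
      have hiff : (simpleT i * w) p.2 < (simpleT i * w) p.1 ↔ w p.2 < w p.1 := by
        rw [Equiv.Perm.mul_apply, Equiv.Perm.mul_apply]
        exact swap_lt (fun hx => hc1 ⟨hx.2, hx.1⟩) (fun hx => hc2 ⟨hx.2, hx.1⟩)
      constructor
      · rintro ⟨ho, hx⟩; exact ⟨hne, ho, hiff.1 hx⟩
      · rintro ⟨_, ho, hx⟩; exact ⟨ho, hiff.2 hx⟩

lemma pair_mem_invSet {i : Fin (n - 1)} {w : Equiv.Perm (Fin n)}
    (h : w⁻¹ (fb i) < w⁻¹ (fa i)) :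
    (w⁻¹ (fb i), w⁻¹ (fa i)) ∈ invSet w := by
  rw [mem_invSet]
  refine ⟨h, ?_⟩
  simp only [Equiv.Perm.apply_inv_self]
  exact fa_lt_fb i

lemma perm_eq_one_of_no_descent {w : Equiv.Perm (Fin n)}
    (h : ∀ i : Fin (n - 1), w⁻¹ (fa i) < w⁻¹ (fb i)) : w = 1 := by
  have key : ∀ k : ℕ, ∀ x : Fin n, x.1 = k → x ≤ w⁻¹ x := by
    intro k
    induction k with
    | zero => intro x hx; rw [Fin.le_def, hx]; omega
    | succ m IH =>
      intro x hx
      have hm : m < n - 1 := by have := x.2; omega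
      set i : Fin (n - 1) := ⟨m, hm⟩
      have hfa : (fa i : Fin n) ≤ w⁻¹ (fa i) := IH (fa i) rfl
      have hx2 : x = fb i := Fin.ext (by rw [hx, fb_val])
      have := h i
      rw [Fin.le_def] at hfa ⊢
      rw [Fin.lt_def] at this
      rw [hx2, fb_val]
      have e1 : (fa i : Fin n).1 = m := rfl
      have e2 : (i : Fin (n - 1)).1 = m := rfl
      omega
  have hval : ∀ x : Fin n, (w⁻¹ x).1 = x.1 := by
    have hsum : ∑ x : Fin n, ((w⁻¹ : Equiv.Perm (Fin n)) x).1 = ∑ x : Fin n, x.1 :=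
      Equiv.sum_comp (w⁻¹ : Equiv.Perm (Fin n)) Fin.val
    have hle : ∀ x ∈ Finset.univ, x.1 ≤ ((w⁻¹ : Equiv.Perm (Fin n)) x).1 :=
      fun x _ => key x.1 x rfl
    have := (Finset.sum_eq_sum_iff_of_le hle).1 hsum.symm
    intro x
    exact (this x (Finset.mem_univ x)).symm
  have hinv : (w⁻¹ : Equiv.Perm (Fin n)) = 1 := by
    ext x
    rw [hval x]
    rfl
  rw [← inv_inv w, hinv]
  rfl

lemma exists_descent {w : Equiv.Perm (Fin n)} (h : w ≠ 1) :
    ∃ i : Fin (n - 1), w⁻¹ (fb i) < w⁻¹ (fa i) := by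
  by_contra hc
  push_neg at hc
  apply h
  apply perm_eq_one_of_no_descent
  intro i
  rcases lt_or_eq_of_le (hc i) with h1 | h1
  · exact h1
  · exfalso
    have : fa i = fb i := by
      have := congrArg w h1
      rwa [Equiv.Perm.apply_inv_self, Equiv.Perm.apply_inv_self] at this
    have := congrArg Fin.val this
    rw [fa_val, fb_val] at this
    omega

lemma eps_mem_DC (i : Fin (n - 1)) : eps i ∈ DC n :=
  Submonoid.subset_closure ⟨i, rfl⟩

lemma psiMat_mem_DC (w : Equiv.Perm (Fin n)) : psiMat w ∈ DC n := by
  generalize hN : (invSet w).card = N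
  induction N using Nat.strong_induction_on generalizing w with
  | _ N IH =>
    by_cases hw : w = 1
    · rw [hw, psiMat_one]
      exact Submonoid.one_mem _
    · obtain ⟨i, hi⟩ := exists_descent hw
      set w'' := simpleT i * w with hw''
      have hs2 : simpleT i * simpleT i = 1 := by
        rw [simpleT_def, Equiv.swap_mul_self]
      have hback : simpleT i * w'' = w := by
        rw [hw'', ← mul_assoc, hs2, one_mul]
      have hinv'' : w''⁻¹ (fa i) < w''⁻¹ (fb i) := by
        have hsinv : (simpleT i)⁻¹ = simpleT i := by
          rw [simpleT_def]; exact Equiv.swap_inv _ _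
        have e1 : w''⁻¹ (fa i) = w⁻¹ (fb i) := by
          rw [hw'', mul_inv_rev, hsinv, Equiv.Perm.mul_apply, simpleT_apply_fa]
        have e2 : w''⁻¹ (fb i) = w⁻¹ (fa i) := by
          rw [hw'', mul_inv_rev, hsinv, Equiv.Perm.mul_apply, simpleT_apply_fb]
        rw [e1, e2]; exact hi
      have hcard : (invSet w'').card < N := by
        rw [hw'', invSet_swap_mul hi, Finset.card_erase_of_mem (pair_mem_invSet hi), hN]
        have : 0 < (invSet w).card := Finset.card_pos.2 ⟨_, pair_mem_invSet hi⟩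
        rw [hN] at this
        omega
      have hkey : psiMat w = eps i * psiMat w'' := by
        rw [eps_mul_psiMat, if_pos hinv'', hback]
      rw [hkey]
      exact Submonoid.mul_mem _ (eps_mem_DC i) (IH _ hcard w'' rfl)

lemma mem_DC_iff {ξ : BRel n} : ξ ∈ DC n ↔ ∃ w : Equiv.Perm (Fin n), psiMat w = ξ := by
  constructor
  · intro hξ
    obtain ⟨l, hl, hprod⟩ := Submonoid.exists_list_of_mem_closure hξ
    clear hξ
    induction l generalizing ξ with
    | nil => exact ⟨1, by rw [psiMat_one, ← hprod, List.prod_nil]⟩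
    | cons a l IHl =>
      obtain ⟨w, hw⟩ := IHl (ξ := l.prod) (fun y hy => hl y (List.mem_cons_of_mem a hy)) rfl
      obtain ⟨i, hi⟩ := hl a List.mem_cons_self
      refine ⟨if w⁻¹ (fa i) < w⁻¹ (fb i) then simpleT i * w else w, ?_⟩
      rw [← eps_mul_psiMat, hw, hi, ← hprod, List.prod_cons]
  · rintro ⟨w, rfl⟩
    exact psiMat_mem_DC w


/-- `j` is a left-to-right maximum position of `w`. -/
def isLR (w : Equiv.Perm (Fin n)) (j : Fin n) : Prop := ∀ k, k ≤ j → w k ≤ w j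
/-- `j` is a right-to-left minimum position of `w`. -/
def isRL (w : Equiv.Perm (Fin n)) (j : Fin n) : Prop := ∀ k, j ≤ k → w j ≤ w k
/-- `j` is a free position of `w` (neither lr-max nor rl-min). -/
def Free (w : Equiv.Perm (Fin n)) (j : Fin n) : Prop := ¬ isLR w j ∧ ¬ isRL w j

lemma isLR_iff {w : Equiv.Perm (Fin n)} {j : Fin n} : isLR w j ↔ w j = lrMax w j := by
  constructor
  · intro h
    exact le_antisymm (self_le_lrMax w j) (lrMax_le w h)
  · intro h k hk
    rw [h]; exact le_lrMax w hk

lemma isRL_iff {w : Equiv.Perm (Fin n)} {j : Fin n} : isRL w j ↔ w j = rlMin w j := by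
  constructor
  · intro h
    exact le_antisymm (le_rlMin w h) (rlMin_le_self w j)
  · intro h k hk
    rw [h]; exact rlMin_le w hk

lemma not_isLR_iff {w : Equiv.Perm (Fin n)} {j : Fin n} :
    ¬ isLR w j ↔ ∃ k, k < j ∧ w j < w k := by
  unfold isLR
  push_neg
  constructor
  · rintro ⟨k, hk1, hk2⟩
    refine ⟨k, lt_of_le_of_ne hk1 ?_, hk2⟩
    rintro rfl
    exact lt_irrefl _ hk2
  · rintro ⟨k, hk1, hk2⟩
    exact ⟨k, le_of_lt hk1, hk2⟩

lemma not_isRL_iff {w : Equiv.Perm (Fin n)} {j : Fin n} :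
    ¬ isRL w j ↔ ∃ k, j < k ∧ w k < w j := by
  unfold isRL
  push_neg
  constructor
  · rintro ⟨k, hk1, hk2⟩
    refine ⟨k, lt_of_le_of_ne hk1 ?_, hk2⟩
    rintro rfl
    exact lt_irrefl _ hk2
  · rintro ⟨k, hk1, hk2⟩
    exact ⟨k, le_of_lt hk1, hk2⟩

lemma isLR_char {w : Equiv.Perm (Fin n)} {j : Fin n} :
    isLR w j ↔ ∀ k, k < j → lrMax w k < lrMax w j := by
  constructor
  · intro h k hk
    obtain ⟨m, hm, hmv⟩ := exists_lrMax w k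
    have hwm : w m ≤ w j := h m (le_of_lt (lt_of_le_of_lt hm hk))
    have hwj : w j = lrMax w j := isLR_iff.1 h
    rw [hmv]
    rcases lt_or_eq_of_le hwm with h1 | h1
    · exact lt_of_lt_of_le h1 (self_le_lrMax w j)
    · exact absurd (w.injective h1) (ne_of_lt (lt_of_le_of_lt hm hk))
  · intro h
    by_contra hc
    obtain ⟨k, hk1, hk2⟩ := not_isLR_iff.1 hc
    obtain ⟨m, hm, hmv⟩ := exists_lrMax w j
    have hmj : m ≠ j := by
      rintro rfl
      exact absurd (le_lrMax w (le_of_lt hk1)) (not_le.2 (hmv ▸ hk2))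
    have hmlt : m < j := lt_of_le_of_ne hm hmj
    have hle : lrMax w j ≤ lrMax w m := hmv ▸ le_lrMax w (le_refl m)
    exact absurd (h m hmlt) (not_lt.2 hle)

lemma isRL_char {w : Equiv.Perm (Fin n)} {j : Fin n} :
    isRL w j ↔ ∀ k, j < k → rlMin w j < rlMin w k := by
  constructor
  · intro h k hk
    obtain ⟨m, hm, hmv⟩ := exists_rlMin w k
    have hwm : w j ≤ w m := h m (le_of_lt (lt_of_lt_of_le hk hm))
    rw [hmv]
    rcases lt_or_eq_of_le hwm with h1 | h1
    · exact lt_of_le_of_lt (rlMin_le_self w j) h1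
    · exact absurd (w.injective h1) (ne_of_lt (lt_of_lt_of_le hk hm))
  · intro h
    by_contra hc
    obtain ⟨k, hk1, hk2⟩ := not_isRL_iff.1 hc
    obtain ⟨m, hm, hmv⟩ := exists_rlMin w j
    have hmj : m ≠ j := by
      rintro rfl
      exact absurd (rlMin_le w (le_of_lt hk1)) (not_le.2 (hmv ▸ hk2))
    have hmlt : j < m := lt_of_le_of_ne hm (Ne.symm hmj)
    have hle : rlMin w m ≤ rlMin w j := hmv ▸ rlMin_le w (le_refl m)
    exact absurd (h m hmlt) (not_lt.2 hle)

lemma isLR_iff_of_psiMat_eq {w w' : Equiv.Perm (Fin n)} (h : psiMat w = psiMat w')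
    (j : Fin n) : isLR w j ↔ isLR w' j := by
  rw [isLR_char, isLR_char, lrMax_eq_of_psiMat_eq h]

lemma isRL_iff_of_psiMat_eq {w w' : Equiv.Perm (Fin n)} (h : psiMat w = psiMat w')
    (j : Fin n) : isRL w j ↔ isRL w' j := by
  rw [isRL_char, isRL_char, rlMin_eq_of_psiMat_eq h]

lemma free_iff_of_psiMat_eq {w w' : Equiv.Perm (Fin n)} (h : psiMat w = psiMat w')
    (j : Fin n) : Free w j ↔ Free w' j := by
  unfold Free
  rw [isLR_iff_of_psiMat_eq h, isRL_iff_of_psiMat_eq h]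

lemma agree_of_not_free {w w' : Equiv.Perm (Fin n)} (h : psiMat w = psiMat w')
    {j : Fin n} (hj : ¬ Free w j) : w j = w' j := by
  unfold Free at hj
  push_neg at hj
  by_cases h1 : isLR w j
  · have h2 : isLR w' j := (isLR_iff_of_psiMat_eq h j).1 h1
    rw [isLR_iff.1 h1, isLR_iff.1 h2, lrMax_eq_of_psiMat_eq h]
  · have h1' := hj h1
    have h2 : isRL w' j := (isRL_iff_of_psiMat_eq h j).1 h1'
    rw [isRL_iff.1 h1', isRL_iff.1 h2, rlMin_eq_of_psiMat_eq h]

lemma mono_on_free {w : Equiv.Perm (Fin n)} (hw : Avoids4321 w) :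
    ∀ p q, Free w p → Free w q → p < q → w p < w q := by
  intro p q hp hq hpq
  by_contra hc
  have hne : w q ≠ w p := fun he => absurd (w.injective he) (ne_of_lt hpq).symm
  have hlt : w q < w p := lt_of_le_of_ne (not_lt.1 hc) hne
  obtain ⟨a, ha1, ha2⟩ := not_isLR_iff.1 hp.1
  obtain ⟨d, hd1, hd2⟩ := not_isRL_iff.1 hq.2
  exact hw ⟨a, p, q, d, ha1, hpq, hd1, hd2, hlt, ha2⟩

lemma avoids_of_mono_on_free {w : Equiv.Perm (Fin n)}
    (h : ∀ p q, Free w p → Free w q → p < q → w p < w q) : Avoids4321 w := by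
  rintro ⟨a, p, q, d, hap, hpq, hqd, h1, h2, h3⟩
  have hp : Free w p :=
    ⟨not_isLR_iff.2 ⟨a, hap, h3⟩, not_isRL_iff.2 ⟨q, hpq, h2⟩⟩
  have hq : Free w q :=
    ⟨not_isLR_iff.2 ⟨p, hpq, h2⟩, not_isRL_iff.2 ⟨d, hqd, h1⟩⟩
  exact absurd (h p q hp hq hpq) (not_lt.2 (le_of_lt h2))

open Classical in
lemma psiMat_injOn_avoids {w w' : Equiv.Perm (Fin n)} (hw : Avoids4321 w)
    (hw' : Avoids4321 w') (h : psiMat w = psiMat w') : w = w' := by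
  classical
  set F : Finset (Fin n) := Finset.univ.filter (fun j => Free w j) with hF
  have hmemF : ∀ j, j ∈ F ↔ Free w j := by
    intro j; simp [hF]
  -- images agree
  have himg : F.image w = F.image w' := by
    have key : ∀ u v : Equiv.Perm (Fin n), Avoids4321 u → Avoids4321 v →
        psiMat u = psiMat v →
        ∀ y ∈ (Finset.univ.filter (fun j => Free u j)).image u,
          y ∈ (Finset.univ.filter (fun j => Free u j)).image v := by
      intro u v hu hv huv y hy
      rw [Finset.mem_image] at hy ⊢
      obtain ⟨x, hx, hxy⟩ := hy
      rw [Finset.mem_filter] at hx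
      refine ⟨v⁻¹ y, ?_, Equiv.Perm.apply_inv_self v y⟩
      rw [Finset.mem_filter]
      refine ⟨Finset.mem_univ _, ?_⟩
      by_contra hc
      have : u (v⁻¹ y) = v (v⁻¹ y) := agree_of_not_free huv hc
      rw [Equiv.Perm.apply_inv_self] at this
      have this2 : u (v⁻¹ y) = u x := by rw [this]; exact hxy.symm
      have hvx : v⁻¹ y = x := u.injective this2
      rw [hvx] at hc
      exact hc hx.2
    apply Finset.Subset.antisymm
    · intro y hy
      exact key w w' hw hw' h y hy
    · intro y hy
      have hFF : (Finset.univ.filter fun j => Free w j) =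
          (Finset.univ.filter fun j => Free w' j) := by
        apply Finset.filter_congr
        intro j _
        exact free_iff_of_psiMat_eq h j
      rw [hF, hFF] at hy ⊢
      exact key w' w hw' hw h.symm y hy
  -- strict monotone enumeration argument
  set k := F.card with hk
  set eF := F.orderEmbOfFin hk.symm with heF
  have heFmem : ∀ x : Fin k, eF x ∈ F := fun x => Finset.orderEmbOfFin_mem F hk.symm x
  have heFfree : ∀ x : Fin k, Free w (eF x) := fun x => (hmemF _).1 (heFmem x)
  have hcardT : (F.image w).card = k := by
    rw [Finset.card_image_of_injective F w.injective]
  have hfmem : ∀ x : Fin k, w (eF x) ∈ F.image w := fun x =>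
    Finset.mem_image_of_mem _ (heFmem x)
  have hgmem : ∀ x : Fin k, w' (eF x) ∈ F.image w := by
    intro x
    rw [himg]
    exact Finset.mem_image_of_mem _ (heFmem x)
  have hfmono : StrictMono (fun x : Fin k => w (eF x)) := by
    intro x y hxy
    exact mono_on_free hw _ _ (heFfree x) (heFfree y) (eF.strictMono hxy)
  have hgmono : StrictMono (fun x : Fin k => w' (eF x)) := by
    intro x y hxy
    refine mono_on_free hw' _ _ ?_ ?_ (eF.strictMono hxy)
    · exact (free_iff_of_psiMat_eq h _).1 (heFfree x)
    · exact (free_iff_of_psiMat_eq h _).1 (heFfree y)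
  have hfeq := Finset.orderEmbOfFin_unique hcardT hfmem hfmono
  have hgeq := Finset.orderEmbOfFin_unique hcardT hgmem hgmono
  have hfg : ∀ x : Fin k, w (eF x) = w' (eF x) := by
    intro x
    rw [congrFun hfeq x, congrFun hgeq x]
  ext j
  by_cases hj : Free w j
  · have hjF : j ∈ F := (hmemF j).2 hj
    have : j ∈ Set.range (⇑eF) := by
      rw [heF, Finset.range_orderEmbOfFin]
      exact hjF
    obtain ⟨x, hx⟩ := this
    have := hfg x
    rw [hx] at this
    exact congrArg Fin.val this
  · exact congrArg Fin.val (agree_of_not_free h hj)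


open Classical in
/-- inversions between free positions -/
noncomputable def invFree (w : Equiv.Perm (Fin n)) : Finset (Fin n × Fin n) :=
  Finset.univ.filter fun p => p.1 < p.2 ∧ Free w p.1 ∧ Free w p.2 ∧ w p.2 < w p.1

open Classical in
lemma mem_invFree {w : Equiv.Perm (Fin n)} {p : Fin n × Fin n} :
    p ∈ invFree w ↔ p.1 < p.2 ∧ Free w p.1 ∧ Free w p.2 ∧ w p.2 < w p.1 := by
  simp [invFree]

lemma exists_adjacent_invFree {w : Equiv.Perm (Fin n)} (h : (invFree w).Nonempty) :
    ∃ p q : Fin n, (p, q) ∈ invFree w ∧ ∀ r, p < r → r < q → ¬ Free w r := by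
  obtain ⟨pr, hpr, hmin⟩ := Finset.exists_min_image (invFree w)
    (fun pr => pr.2.1 - pr.1.1) h
  refine ⟨pr.1, pr.2, hpr, ?_⟩
  intro r hr1 hr2 hfr
  rw [mem_invFree] at hpr
  obtain ⟨ho, hf1, hf2, hv⟩ := hpr
  by_cases hc : w r < w pr.1
  · have hmem : (pr.1, r) ∈ invFree w := mem_invFree.2 ⟨hr1, hf1, hfr, hc⟩
    have := hmin _ hmem
    simp only at this
    rw [Fin.lt_def] at hr1 hr2
    omega
  · have hne : w pr.1 ≠ w r := fun he => (ne_of_lt hr1) (w.injective he)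
    have hc2 : w pr.2 < w r := lt_trans hv (lt_of_le_of_ne (not_lt.1 hc) hne)
    have hmem : (r, pr.2) ∈ invFree w := mem_invFree.2 ⟨hr2, hfr, hf2, hc2⟩
    have := hmin _ hmem
    simp only at this
    rw [Fin.lt_def] at hr1 hr2
    omega

section SwapStep

variable {w : Equiv.Perm (Fin n)} {p q : Fin n}

lemma swap_free_apply (hfp : Free w p) (hfq : Free w q) (x : Fin n) :
    Free w (Equiv.swap p q x) ↔ Free w x := by
  rcases eq_or_ne x p with rfl | hxp
  · rw [Equiv.swap_apply_left]
    exact ⟨fun _ => hfp, fun _ => hfq⟩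
  · rcases eq_or_ne x q with rfl | hxq
    · rw [Equiv.swap_apply_right]
      exact ⟨fun _ => hfq, fun _ => hfp⟩
    · rw [Equiv.swap_apply_of_ne_of_ne hxp hxq]

lemma lrMax_mul_swap (hpq : p < q) (hfp : Free w p) (hlt : w q < w p) :
    lrMax (w * Equiv.swap p q) = lrMax w := by
  funext j
  apply le_antisymm
  · apply lrMax_le
    intro k hk
    rw [Equiv.Perm.mul_apply]
    rcases eq_or_ne k p with rfl | hkp
    · rw [Equiv.swap_apply_left]
      exact le_of_lt (lt_of_lt_of_le hlt (le_lrMax w hk))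
    · rcases eq_or_ne k q with rfl | hkq
      · rw [Equiv.swap_apply_right]
        exact le_lrMax w (le_of_lt (lt_of_lt_of_le hpq hk))
      · rw [Equiv.swap_apply_of_ne_of_ne hkp hkq]
        exact le_lrMax w hk
  · apply lrMax_le
    intro k hk
    rcases eq_or_ne k p with hkp | hkp
    · obtain ⟨m, hm1, hm2⟩ := not_isLR_iff.1 hfp.1
      have hmp : m ≠ p := ne_of_lt hm1
      have hmq : m ≠ q := ne_of_lt (lt_trans hm1 hpq)
      have hwm : (w * Equiv.swap p q) m = w m := by
        rw [Equiv.Perm.mul_apply, Equiv.swap_apply_of_ne_of_ne hmp hmq]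
      have hmk : m ≤ j := le_of_lt (lt_of_lt_of_le (hkp ▸ hm1) hk)
      calc w k = w p := by rw [hkp]
        _ ≤ w m := le_of_lt hm2
        _ = (w * Equiv.swap p q) m := hwm.symm
        _ ≤ _ := le_lrMax _ hmk
    · rcases eq_or_ne k q with hkq | hkq
      · have hwp : (w * Equiv.swap p q) p = w q := by
          rw [Equiv.Perm.mul_apply, Equiv.swap_apply_left]
        have hpj : p ≤ j := le_of_lt (lt_of_lt_of_le hpq (hkq ▸ hk))
        calc w k = w q := by rw [hkq]
          _ = (w * Equiv.swap p q) p := hwp.symm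
          _ ≤ _ := le_lrMax _ hpj
      · have hwk : (w * Equiv.swap p q) k = w k := by
          rw [Equiv.Perm.mul_apply, Equiv.swap_apply_of_ne_of_ne hkp hkq]
        calc w k = (w * Equiv.swap p q) k := hwk.symm
          _ ≤ _ := le_lrMax _ hk

lemma rlMin_mul_swap (hpq : p < q) (hfq : Free w q) (hlt : w q < w p) :
    rlMin (w * Equiv.swap p q) = rlMin w := by
  funext j
  apply le_antisymm
  · apply le_rlMin
    intro k hk
    rcases eq_or_ne k q with hkq | hkq
    · obtain ⟨m, hm1, hm2⟩ := not_isRL_iff.1 hfq.2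
      have hmq : m ≠ q := (ne_of_lt hm1).symm
      have hmp : m ≠ p := (ne_of_lt (lt_trans hpq hm1)).symm
      have hwm : (w * Equiv.swap p q) m = w m := by
        rw [Equiv.Perm.mul_apply, Equiv.swap_apply_of_ne_of_ne hmp hmq]
      have hjm : j ≤ m := le_of_lt (lt_of_le_of_lt (hkq ▸ hk) hm1)
      calc rlMin (w * Equiv.swap p q) j ≤ (w * Equiv.swap p q) m := rlMin_le _ hjm
        _ = w m := hwm
        _ ≤ w q := le_of_lt hm2
        _ = w k := by rw [hkq]
    · rcases eq_or_ne k p with hkp | hkp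
      · have hwq : (w * Equiv.swap p q) q = w p := by
          rw [Equiv.Perm.mul_apply, Equiv.swap_apply_right]
        have hjq : j ≤ q := le_of_lt (lt_of_le_of_lt (hkp ▸ hk) hpq)
        calc rlMin (w * Equiv.swap p q) j ≤ (w * Equiv.swap p q) q :=
            rlMin_le _ hjq
          _ = w p := hwq
          _ = w k := by rw [hkp]
      · have hwk : (w * Equiv.swap p q) k = w k := by
          rw [Equiv.Perm.mul_apply, Equiv.swap_apply_of_ne_of_ne hkp hkq]
        calc rlMin (w * Equiv.swap p q) j ≤ (w * Equiv.swap p q) k := rlMin_le _ hk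
          _ = w k := hwk
  · apply le_rlMin
    intro k hk
    rw [Equiv.Perm.mul_apply]
    rcases eq_or_ne k p with rfl | hkp
    · rw [Equiv.swap_apply_left]
      exact rlMin_le w (le_of_lt (lt_of_le_of_lt hk hpq))
    · rcases eq_or_ne k q with rfl | hkq
      · rw [Equiv.swap_apply_right]
        exact le_of_lt (lt_of_le_of_lt (rlMin_le w hk) hlt)
      · rw [Equiv.swap_apply_of_ne_of_ne hkp hkq]
        exact rlMin_le w hk

lemma psiMat_mul_swap (hpq : p < q) (hfp : Free w p) (hfq : Free w q)
    (hlt : w q < w p) : psiMat (w * Equiv.swap p q) = psiMat w :=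
  psiMat_eq_of (lrMax_mul_swap hpq hfp hlt) (rlMin_mul_swap hpq hfq hlt)

lemma swap_order (hpq : p < q) (hlt : w q < w p)
    (hb : ∀ r, p < r → r < q → ¬ Free w r) :
    ∀ x y : Fin n, x < y → ¬(x = p ∧ y = q) → Free w x → Free w y →
      Equiv.swap p q x < Equiv.swap p q y := by
  intro x y hxy hne hfx hfy
  rcases eq_or_ne x p with rfl | hxp
  · have hyq : y ≠ q := fun he => hne ⟨rfl, he⟩
    have hygt : q < y := by
      rcases lt_or_ge y q with hy | hy
      · exact absurd hfy (hb y hxy hy)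
      · exact lt_of_le_of_ne hy (Ne.symm hyq)
    have hyp : y ≠ x := (ne_of_lt hxy).symm
    rw [Equiv.swap_apply_left, Equiv.swap_apply_of_ne_of_ne hyp hyq]
    exact hygt
  · rcases eq_or_ne x q with rfl | hxq
    · have hyp : y ≠ p := (ne_of_lt (lt_trans hpq hxy)).symm
      have hyq : y ≠ x := (ne_of_lt hxy).symm
      rw [Equiv.swap_apply_right, Equiv.swap_apply_of_ne_of_ne hyp hyq]
      exact lt_trans hpq hxy
    · rcases eq_or_ne y p with rfl | hyp
      · rw [Equiv.swap_apply_left, Equiv.swap_apply_of_ne_of_ne hxp hxq]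
        exact lt_trans hxy hpq
      · rcases eq_or_ne y q with rfl | hyq
        · have hxlt : x < p := by
            rcases lt_or_ge x p with hx | hx
            · exact hx
            · exact absurd hfx (hb x (lt_of_le_of_ne hx (Ne.symm hxp)) hxy)
          rw [Equiv.swap_apply_right, Equiv.swap_apply_of_ne_of_ne hxp hxq]
          exact hxlt
        · rw [Equiv.swap_apply_of_ne_of_ne hxp hxq,
            Equiv.swap_apply_of_ne_of_ne hyp hyq]
          exact hxy

open Classical in
lemma invFree_mul_swap (hpq : p < q) (hfp : Free w p) (hfq : Free w q)
    (hlt : w q < w p) (hb : ∀ r, p < r → r < q → ¬ Free w r) :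
    invFree (w * Equiv.swap p q) =
      Finset.image (Prod.map (Equiv.swap p q) (Equiv.swap p q))
        ((invFree w).erase (p, q)) := by
  have hpsi := psiMat_mul_swap hpq hfp hfq hlt
  have hfree2 : ∀ x, Free (w * Equiv.swap p q) x ↔ Free w x :=
    fun x => free_iff_of_psiMat_eq hpsi x
  have hord := swap_order (w := w) hpq hlt hb
  have hss : ∀ x : Fin n, Equiv.swap p q (Equiv.swap p q x) = x :=
    fun x => Equiv.swap_apply_self p q x
  ext ⟨x, y⟩
  rw [mem_invFree, Finset.mem_image]
  simp only [Equiv.Perm.mul_apply]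
  constructor
  · rintro ⟨hxy, hfx, hfy, hv⟩
    rw [hfree2] at hfx hfy
    have hxyne : ¬(x = p ∧ y = q) := by
      rintro ⟨rfl, rfl⟩
      rw [Equiv.swap_apply_right, Equiv.swap_apply_left] at hv
      exact absurd hv (not_lt.2 (le_of_lt hlt))
    refine ⟨(Equiv.swap p q x, Equiv.swap p q y), ?_, ?_⟩
    · rw [Finset.mem_erase, mem_invFree]
      refine ⟨?_, ?_, ?_, ?_, hv⟩
      · intro hcon
        have h1 : Equiv.swap p q x = p := congrArg Prod.fst hcon
        have h2 : Equiv.swap p q y = q := congrArg Prod.snd hcon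
        have hx : x = q := by rw [← hss x, h1, Equiv.swap_apply_left]
        have hy : y = p := by rw [← hss y, h2, Equiv.swap_apply_right]
        rw [hx, hy] at hxy
        exact absurd hpq (not_lt.2 (le_of_lt hxy))
      · exact hord x y hxy hxyne hfx hfy
      · exact (swap_free_apply hfp hfq x).2 hfx
      · exact (swap_free_apply hfp hfq y).2 hfy
    · simp [Prod.map, hss]
  · rintro ⟨⟨u, v⟩, huv, heq⟩
    rw [Finset.mem_erase, mem_invFree] at huv
    obtain ⟨hne, ho, hfu, hfv, hv⟩ := huv
    have hx : Equiv.swap p q u = x := congrArg Prod.fst heq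
    have hy : Equiv.swap p q v = y := congrArg Prod.snd heq
    have hxu : Equiv.swap p q x = u := by rw [← hx, hss]
    have hyv : Equiv.swap p q y = v := by rw [← hy, hss]
    have huvne : ¬(u = p ∧ v = q) := by
      rintro ⟨rfl, rfl⟩
      exact hne rfl
    refine ⟨?_, ?_, ?_, ?_⟩
    · rw [← hx, ← hy]
      exact hord u v ho huvne hfu hfv
    · rw [hfree2, ← hx, swap_free_apply hfp hfq]
      exact hfu
    · rw [hfree2, ← hy, swap_free_apply hfp hfq]
      exact hfv
    · rw [hxu, hyv]
      exact hv

end SwapStep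

lemma exists_avoiding (w : Equiv.Perm (Fin n)) :
    ∃ w' : Equiv.Perm (Fin n), psiMat w' = psiMat w ∧ Avoids4321 w' := by
  classical
  generalize hN : (invFree w).card = N
  induction N using Nat.strong_induction_on generalizing w with
  | _ N IH =>
    by_cases hO : invFree w = ∅
    · refine ⟨w, rfl, avoids_of_mono_on_free ?_⟩
      intro x y hfx hfy hxy
      by_contra hc
      have hne : w y ≠ w x := fun he => (ne_of_lt hxy) ((w.injective he).symm)
      have : (x, y) ∈ invFree w :=
        mem_invFree.2 ⟨hxy, hfx, hfy, lt_of_le_of_ne (not_lt.1 hc) hne⟩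
      rw [hO] at this
      exact absurd this (Finset.notMem_empty _)
    · obtain ⟨p, q, hmem, hb⟩ :=
        exists_adjacent_invFree (Finset.nonempty_of_ne_empty hO)
      rw [mem_invFree] at hmem
      obtain ⟨hpq, hfp, hfq, hlt⟩ := hmem
      set w₂ := w * Equiv.swap p q with hw₂
      have hpsi : psiMat w₂ = psiMat w := psiMat_mul_swap hpq hfp hfq hlt
      have hcard : (invFree w₂).card < N := by
        rw [hw₂, invFree_mul_swap hpq hfp hfq hlt hb]
        have hinj : Function.Injective
            (Prod.map (Equiv.swap p q) (Equiv.swap p q)) :=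
          Function.Injective.prodMap (Equiv.swap p q).injective
            (Equiv.swap p q).injective
        rw [Finset.card_image_of_injective _ hinj,
          Finset.card_erase_of_mem (mem_invFree.2 ⟨hpq, hfp, hfq, hlt⟩), hN]
        have hpos : 0 < (invFree w).card :=
          Finset.card_pos.2 ⟨(p, q), mem_invFree.2 ⟨hpq, hfp, hfq, hlt⟩⟩
        rw [hN] at hpos
        omega
      obtain ⟨w', hw'1, hw'2⟩ := IH _ hcard w₂ rfl
      exact ⟨w', hw'1.trans hpsi, hw'2⟩

end Stmt12

/-- `|DC_n|` equals the number of 4321-avoiding permutations in `S_n`. -/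
theorem stmt_12 (n : ℕ) :
    Nat.card (DC n) = Nat.card {w : Equiv.Perm (Fin n) // Avoids4321 w} := by
  have hbij : Function.Bijective (fun w : {w : Equiv.Perm (Fin n) // Avoids4321 w} =>
      (⟨psiMat w.1, Stmt12.psiMat_mem_DC w.1⟩ : DC n)) := by
    constructor
    · rintro ⟨w, hw⟩ ⟨w', hw'⟩ he
      have h1 : psiMat w = psiMat w' := congrArg Subtype.val he
      exact Subtype.ext (Stmt12.psiMat_injOn_avoids hw hw' h1)
    · rintro ⟨ξ, hξ⟩
      obtain ⟨w, hw⟩ := Stmt12.mem_DC_iff.1 hξ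
      obtain ⟨w', hw'1, hw'2⟩ := Stmt12.exists_avoiding w
      exact ⟨⟨w', hw'2⟩, Subtype.ext (hw'1.trans hw)⟩
  exact (Nat.card_eq_of_bijective _ hbij).symm
end

section
/- A 4321-avoiding permutation w ∈ S_n is an involution (w² = id) if and only if its image in the double Catalan monoid is a symmetric Boolean matrix. -/
open Pointwise

section Aux

variable {n : ℕ}

lemma le_lrMax_iff (w : Equiv.Perm (Fin n)) (i j : Fin n) :
    i ≤ lrMax w j ↔ ∃ k, k ≤ j ∧ i ≤ w k := by
  unfold lrMax; exact (Finset.le_sup'_iff _).trans (by simp)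

lemma rlMin_le_iff (w : Equiv.Perm (Fin n)) (i j : Fin n) :
    rlMin w j ≤ i ↔ ∃ k, j ≤ k ∧ w k ≤ i := by
  unfold rlMin; exact (Finset.inf'_le_iff _).trans (by simp)

lemma apply_le_lrMax (w : Equiv.Perm (Fin n)) (j : Fin n) : w j ≤ lrMax w j :=
  Finset.le_sup' _ (Finset.mem_Iic.2 le_rfl)

lemma rlMin_le_apply (w : Equiv.Perm (Fin n)) (j : Fin n) : rlMin w j ≤ w j :=
  Finset.inf'_le _ (Finset.mem_Ici.2 le_rfl)

lemma psiMat_inv (w : Equiv.Perm (Fin n)) (i j : Fin n) :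
    psiMat w⁻¹ i j ↔ psiMat w j i := by
  unfold psiMat
  have h1 : i ≤ lrMax w⁻¹ j ↔ rlMin w i ≤ j := by
    rw [le_lrMax_iff, rlMin_le_iff]
    constructor
    · rintro ⟨k, hk, hik⟩
      exact ⟨w⁻¹ k, hik, by simpa using hk⟩
    · rintro ⟨k, hk, hik⟩
      exact ⟨w k, hik, by simpa using hk⟩
  have h2 : rlMin w⁻¹ j ≤ i ↔ j ≤ lrMax w i := by
    rw [rlMin_le_iff, le_lrMax_iff]
    constructor
    · rintro ⟨k, hk, hik⟩
      exact ⟨w⁻¹ k, hik, by simpa using hk⟩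
    · rintro ⟨k, hk, hik⟩
      exact ⟨w k, hik, by simpa using hk⟩
  rw [h1, h2]; tauto

/-- `w j` is a left-to-right maximum. -/
def MaxRec (w : Equiv.Perm (Fin n)) (j : Fin n) : Prop := ∀ i, i < j → w i < w j

/-- `w j` is a right-to-left minimum. -/
def MinRec (w : Equiv.Perm (Fin n)) (j : Fin n) : Prop := ∀ k, j < k → w j < w k

lemma maxRec_val {w : Equiv.Perm (Fin n)} {j : Fin n} (h : MaxRec w j) :
    w j = lrMax w j := by
  refine le_antisymm (apply_le_lrMax w j) (Finset.sup'_le _ _ fun k hk => ?_)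
  rcases lt_or_eq_of_le (Finset.mem_Iic.1 hk) with hlt | rfl
  · exact (h k hlt).le
  · exact le_rfl

lemma minRec_val {w : Equiv.Perm (Fin n)} {j : Fin n} (h : MinRec w j) :
    w j = rlMin w j := by
  refine le_antisymm (Finset.le_inf' _ _ fun k hk => ?_) (rlMin_le_apply w j)
  rcases lt_or_eq_of_le (Finset.mem_Ici.1 hk) with hlt | rfl
  · exact (h k hlt).le
  · exact le_rfl

lemma maxRec_iff (w : Equiv.Perm (Fin n)) (j : Fin n) :
    MaxRec w j ↔ ∀ i, i < j → lrMax w i < lrMax w j := by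
  constructor
  · intro h i hij
    have h1 : lrMax w i < w j := by
      unfold lrMax
      refine (Finset.sup'_lt_iff _).2 ?_
      intro k hk
      exact h k (lt_of_le_of_lt (Finset.mem_Iic.1 hk) hij)
    exact lt_of_lt_of_le h1 (apply_le_lrMax w j)
  · intro h i hij
    by_contra hcon
    have hne : w i ≠ w j := fun he => hij.ne (w.injective he)
    have hji : w j < w i := (not_lt.1 hcon).lt_of_ne (Ne.symm hne)
    obtain ⟨k, hk, hke⟩ := Finset.exists_mem_eq_sup' (⟨j, Finset.mem_Iic.2 le_rfl⟩ :
      (Finset.Iic j).Nonempty) (fun k : Fin n => w k)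
    have hke' : lrMax w j = w k := hke
    have hkj : k ≤ j := Finset.mem_Iic.1 hk
    have hwi_le : w i ≤ lrMax w j := Finset.le_sup' (fun k => w k) (Finset.mem_Iic.2 hij.le)
    have hkne : k ≠ j := by
      rintro rfl
      have hle : lrMax w k ≤ w k := le_of_eq hke'
      exact absurd ((hwi_le.trans hle).trans_lt hji) (lt_irrefl _)
    have hklt : k < j := hkj.lt_of_ne hkne
    have h2 : lrMax w j ≤ lrMax w k := hke'.trans_le (apply_le_lrMax w k)
    exact absurd (h k hklt) (not_lt.2 h2)

lemma minRec_iff (w : Equiv.Perm (Fin n)) (j : Fin n) :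
    MinRec w j ↔ ∀ k, j < k → rlMin w j < rlMin w k := by
  constructor
  · intro h k hjk
    have h1 : w j < rlMin w k := by
      unfold rlMin
      refine (Finset.lt_inf'_iff _).2 ?_
      intro m hm
      exact h m (lt_of_lt_of_le hjk (Finset.mem_Ici.1 hm))
    exact lt_of_le_of_lt (rlMin_le_apply w j) h1
  · intro h k hjk
    by_contra hcon
    have hne : w j ≠ w k := fun he => hjk.ne (w.injective he)
    have hkj : w k < w j := (not_lt.1 hcon).lt_of_ne (Ne.symm hne)
    obtain ⟨m, hm, hme⟩ := Finset.exists_mem_eq_inf' (⟨j, Finset.mem_Ici.2 le_rfl⟩ :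
      (Finset.Ici j).Nonempty) (fun k : Fin n => w k)
    have hme' : rlMin w j = w m := hme
    have hjm : j ≤ m := Finset.mem_Ici.1 hm
    have hwk_le : rlMin w j ≤ w k := Finset.inf'_le (fun k => w k) (Finset.mem_Ici.2 hjk.le)
    have hmne : m ≠ j := by
      rintro rfl
      have hle : w m ≤ rlMin w m := le_of_eq hme'.symm
      exact absurd ((hle.trans hwk_le).trans_lt hkj) (lt_irrefl _)
    have hmlt : j < m := hjm.lt_of_ne (Ne.symm hmne)
    have h2 : rlMin w m ≤ rlMin w j := (rlMin_le_apply w m).trans (le_of_eq hme'.symm)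
    exact absurd (h m hmlt) (not_lt.2 h2)

lemma not_maxRec {w : Equiv.Perm (Fin n)} {j : Fin n} (h : ¬ MaxRec w j) :
    ∃ i, i < j ∧ w j < w i := by
  unfold MaxRec at h
  push_neg at h
  obtain ⟨i, hij, hw⟩ := h
  have hne : w i ≠ w j := fun he => hij.ne (w.injective he)
  exact ⟨i, hij, hw.lt_of_ne (Ne.symm hne)⟩

lemma not_minRec {w : Equiv.Perm (Fin n)} {j : Fin n} (h : ¬ MinRec w j) :
    ∃ k, j < k ∧ w k < w j := by
  unfold MinRec at h
  push_neg at h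
  obtain ⟨k, hjk, hw⟩ := h
  have hne : w j ≠ w k := fun he => hjk.ne (w.injective he)
  exact ⟨k, hjk, hw.lt_of_ne hne.symm⟩

lemma bad_mono {w : Equiv.Perm (Fin n)} (hw : Avoids4321 w) {j1 j2 : Fin n}
    (h1 : ¬ MaxRec w j1) (h2 : ¬ MinRec w j2) (h : j1 < j2) : w j1 < w j2 := by
  by_contra hcon
  have hne : w j1 ≠ w j2 := fun he => h.ne (w.injective he)
  have h21 : w j2 < w j1 := (not_lt.1 hcon).lt_of_ne (Ne.symm hne)
  obtain ⟨i, hij, hi⟩ := not_maxRec h1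
  obtain ⟨k, hjk, hk⟩ := not_minRec h2
  exact hw ⟨i, j1, j2, k, hij, h, hjk, hk, h21, hi⟩

lemma avoids4321_inv {w : Equiv.Perm (Fin n)} (hw : Avoids4321 w) :
    Avoids4321 w⁻¹ := by
  rintro ⟨i, j, k, l, hij, hjk, hkl, h1, h2, h3⟩
  refine hw ⟨w⁻¹ l, w⁻¹ k, w⁻¹ j, w⁻¹ i, h1, h2, h3, ?_, ?_, ?_⟩ <;> simpa

open Classical in
lemma strictMonoOn_unique (S : Finset (Fin n)) (f g : Fin n → Fin n)
    (hf : ∀ a ∈ S, ∀ b ∈ S, a < b → f a < f b)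
    (hg : ∀ a ∈ S, ∀ b ∈ S, a < b → g a < g b)
    (him : S.image f = S.image g) : ∀ x ∈ S, f x = g x := by
  induction S using Finset.strongInduction with
  | _ S ih =>
    intro x hx
    have hS : S.Nonempty := ⟨x, hx⟩
    set m := S.min' hS with hm_def
    have hm : m ∈ S := S.min'_mem hS
    have hmin : ∀ (h : Fin n → Fin n), (∀ a ∈ S, ∀ b ∈ S, a < b → h a < h b) →
        ∀ y ∈ S.image h, h m ≤ y := by
      rintro h hmono y hy
      obtain ⟨b, hb, rfl⟩ := Finset.mem_image.1 hy
      have hmb : m ≤ b := S.min'_le b hb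
      rcases eq_or_lt_of_le hmb with he | hlt
      · rw [he]
      · exact (hmono m hm b hb hlt).le
    have hfm : f m = g m := by
      have h1 : f m ≤ g m :=
        hmin f hf _ (him ▸ Finset.mem_image_of_mem g hm)
      have h2 : g m ≤ f m :=
        hmin g hg _ (him.symm ▸ Finset.mem_image_of_mem f hm)
      exact le_antisymm h1 h2
    rcases eq_or_ne x m with rfl | hxm
    · exact hfm
    · have hx' : x ∈ S.erase m := Finset.mem_erase.2 ⟨hxm, hx⟩
      have hnm : ∀ (h : Fin n → Fin n), (∀ a ∈ S, ∀ b ∈ S, a < b → h a < h b) →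
          h m ∉ (S.erase m).image h := by
        rintro h hmono hmem
        obtain ⟨b, hb, hbe⟩ := Finset.mem_image.1 hmem
        have hbS := Finset.mem_of_mem_erase hb
        have hmb : m < b := (S.min'_le b hbS).lt_of_ne
          (Ne.symm (Finset.ne_of_mem_erase hb))
        exact absurd hbe (hmono m hm b hbS hmb).ne'
      have hins : ∀ (h : Fin n → Fin n),
          S.image h = insert (h m) ((S.erase m).image h) := by
        intro h
        conv_lhs => rw [← Finset.insert_erase hm]
        rw [Finset.image_insert]
      have him' : (S.erase m).image f = (S.erase m).image g := by
        have h1 : insert (f m) ((S.erase m).image f)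
            = insert (f m) ((S.erase m).image g) := by
          rw [← hins f, him, hins g, hfm]
        have hA : f m ∉ (S.erase m).image f := hnm f hf
        have hB : f m ∉ (S.erase m).image g := by rw [hfm]; exact hnm g hg
        calc (S.erase m).image f
            = (insert (f m) ((S.erase m).image f)).erase (f m) :=
              (Finset.erase_insert hA).symm
          _ = (insert (f m) ((S.erase m).image g)).erase (f m) := by rw [h1]
          _ = (S.erase m).image g := Finset.erase_insert hB
      exact ih (S.erase m) (Finset.erase_ssubset hm)
        (fun a ha b hb => hf a (Finset.mem_of_mem_erase ha) b (Finset.mem_of_mem_erase hb))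
        (fun a ha b hb => hg a (Finset.mem_of_mem_erase ha) b (Finset.mem_of_mem_erase hb))
        him' x hx'

open Classical in
lemma perm_eq_of_lrMax_rlMin {w v : Equiv.Perm (Fin n)}
    (hw : Avoids4321 w) (hv : Avoids4321 v)
    (hα : ∀ j, lrMax w j = lrMax v j) (hβ : ∀ j, rlMin w j = rlMin v j) : w = v := by
  have hrecmax : ∀ j, MaxRec w j ↔ MaxRec v j := by
    intro j; rw [maxRec_iff, maxRec_iff]; simp only [hα]
  have hrecmin : ∀ j, MinRec w j ↔ MinRec v j := by
    intro j; rw [minRec_iff, minRec_iff]; simp only [hβ]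
  have hgood : ∀ j, (MaxRec w j ∨ MinRec w j) → w j = v j := by
    rintro j (h | h)
    · rw [maxRec_val h, maxRec_val ((hrecmax j).1 h), hα]
    · rw [minRec_val h, minRec_val ((hrecmin j).1 h), hβ]
  set G : Finset (Fin n) := Finset.univ.filter (fun j => MaxRec w j ∨ MinRec w j) with hG
  set B : Finset (Fin n) := Finset.univ.filter (fun j => ¬ (MaxRec w j ∨ MinRec w j)) with hB
  have hpart : ∀ j : Fin n, j ∈ G ∨ j ∈ B := by
    intro j
    by_cases h : MaxRec w j ∨ MinRec w j
    · exact Or.inl (Finset.mem_filter.2 ⟨Finset.mem_univ _, h⟩)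
    · exact Or.inr (Finset.mem_filter.2 ⟨Finset.mem_univ _, h⟩)
  have hcompl : ∀ (u : Equiv.Perm (Fin n)), B.image u = Finset.univ \ G.image u := by
    intro u
    ext y
    simp only [Finset.mem_sdiff, Finset.mem_univ, true_and]
    constructor
    · rintro hy
      obtain ⟨b, hb, rfl⟩ := Finset.mem_image.1 hy
      intro hyG
      obtain ⟨a, ha, hae⟩ := Finset.mem_image.1 hyG
      have : a = b := u.injective hae
      subst this
      exact (Finset.mem_filter.1 hb).2 (Finset.mem_filter.1 ha).2
    · intro hy
      rcases hpart (u.symm y) with hG' | hB'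
      · exact absurd (Finset.mem_image.2 ⟨u.symm y, hG', u.apply_symm_apply y⟩) hy
      · exact Finset.mem_image.2 ⟨u.symm y, hB', u.apply_symm_apply y⟩
  have hGim : G.image w = G.image v := by
    apply Finset.image_congr
    intro x hx
    exact hgood x (Finset.mem_filter.1 hx).2
  have himB : B.image w = B.image v := by
    rw [hcompl w, hcompl v, hGim]
  have hbadmem : ∀ j ∈ B, ¬ MaxRec w j ∧ ¬ MinRec w j := by
    intro j hj
    have := (Finset.mem_filter.1 hj).2
    tauto
  have hbadmemv : ∀ j ∈ B, ¬ MaxRec v j ∧ ¬ MinRec v j := by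
    intro j hj
    have := hbadmem j hj
    rw [hrecmax j, hrecmin j] at this
    exact this
  have hbad : ∀ x ∈ B, w x = v x :=
    strictMonoOn_unique B w v
      (fun a ha b hb hab => bad_mono hw (hbadmem a ha).1 (hbadmem b hb).2 hab)
      (fun a ha b hb hab => bad_mono hv (hbadmemv a ha).1 (hbadmemv b hb).2 hab)
      himB
  ext j
  rcases hpart j with h | h
  · exact congrArg Fin.val (hgood j (Finset.mem_filter.1 h).2)
  · exact congrArg Fin.val (hbad j h)

end Aux

/-- A 4321-avoiding permutation is an involution iff its image in
the double Catalan monoid is a symmetric Boolean matrix. -/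
theorem stmt_13 (n : ℕ) (w : Equiv.Perm (Fin n)) (hw : Avoids4321 w) :
    w * w = 1 ↔ (∀ i j, psiMat w i j ↔ psiMat w j i) := by
  constructor
  · intro h i j
    have hinv : w⁻¹ = w := inv_eq_of_mul_eq_one_left h
    rw [← psiMat_inv w j i, hinv]
  · intro h
    have hsym : ∀ i j, psiMat w⁻¹ i j ↔ psiMat w i j := by
      intro i j
      rw [psiMat_inv w i j]
      exact (h j i)
    have hdiag : ∀ (u : Equiv.Perm (Fin n)) (j : Fin n), rlMin u j ≤ lrMax u j :=
      fun u j => (rlMin_le_apply u j).trans (apply_le_lrMax u j)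
    have hα : ∀ j, lrMax w j = lrMax w⁻¹ j := by
      intro j
      have h1 : psiMat w⁻¹ (lrMax w j) j := by
        rw [hsym]
        exact ⟨hdiag w j, le_rfl⟩
      have h2 : psiMat w (lrMax w⁻¹ j) j := by
        rw [← hsym]
        exact ⟨hdiag w⁻¹ j, le_rfl⟩
      exact le_antisymm h1.2 h2.2
    have hβ : ∀ j, rlMin w j = rlMin w⁻¹ j := by
      intro j
      have h1 : psiMat w⁻¹ (rlMin w j) j := by
        rw [hsym]
        exact ⟨le_rfl, hdiag w j⟩
      have h2 : psiMat w (rlMin w⁻¹ j) j := by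
        rw [← hsym]
        exact ⟨le_rfl, hdiag w⁻¹ j⟩
      exact le_antisymm h2.1 h1.1
    have heq : w = w⁻¹ := perm_eq_of_lrMax_rlMin hw (avoids4321_inv hw) hα hβ
    calc w * w = w * w⁻¹ := by rw [← heq]
    _ = 1 := mul_inv_cancel w
end
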